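/- Let (X, 𝒜, μ) be a complete semi-finite measure space and ℰ ⊆ 𝒜 ∖ 𝒩_μ an almost disjointed 𝒩_μ-generating family with μ(Z) < ∞ for every Z ∈ ℰ. Let (X̂, 𝒜̂, μ̂) and p : X̂ → X be as in the construction of the strictly localizable version: X̂ = {(Z, x) : Z ∈ ℰ, x ∈ Z}, p(Z, x) = x, 𝒜̂ = {Â ⊆ X̂ : {x ∈ Z : (Z, x) ∈ Â} ∈ 𝒜 for every Z ∈ ℰ}, and μ̂(Â) = ∑_{Z∈ℰ} μ({x ∈ Z : (Z, x) ∈ Â}). Then the map sending the class of an integrable function f to the class of f ∘ p is a surjective linear isometry (an isometric isomorphism of Banach spaces) from L¹(X, 𝒜, μ) onto L¹(X̂, 𝒜̂, μ̂). -/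

import Mathlib

open Set MeasureTheory ENNReal
open scoped symmDiff

namespace MSNPaper

variable {X Y : Type*}

/-- `A` is a σ-algebra of subsets of the carrier set `Z`. -/
def IsSigmaAlgebraOn (Z : Set X) (A : Set (Set X)) : Prop :=
  (∀ s ∈ A, s ⊆ Z) ∧ ∅ ∈ A ∧ (∀ s ∈ A, Z \ s ∈ A) ∧
    ∀ f : ℕ → Set X, (∀ n, f n ∈ A) → (⋃ n, f n) ∈ A

/-- `N` is a σ-ideal of the σ-algebra `A`. -/
def IsSigmaIdeal (A N : Set (Set X)) : Prop :=
  N ⊆ A ∧ ∅ ∈ N ∧ (∀ s ∈ A, ∀ t ∈ N, s ⊆ t → s ∈ N) ∧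
    ∀ f : ℕ → Set X, (∀ n, f n ∈ N) → (⋃ n, f n) ∈ N

/-- A measurable space with negligibles (MSN) on the carrier set `Z`. -/
def IsMSN (Z : Set X) (A N : Set (Set X)) : Prop :=
  IsSigmaAlgebraOn Z A ∧ IsSigmaIdeal A N

/-- The MSN is saturated: every subset of a negligible set is negligible. -/
def Saturated (N : Set (Set X)) : Prop :=
  ∀ s t : Set X, s ⊆ t → t ∈ N → s ∈ N

/-- `U` is an `N`-essential upper bound of the collection `E`. -/
def IsEssUB (N E : Set (Set X)) (U : Set X) : Prop :=
  ∀ e ∈ E, e \ U ∈ N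

/-- `S` is an `N`-essential supremum of the collection `E ⊆ A`. -/
def IsEssSup (A N E : Set (Set X)) (S : Set X) : Prop :=
  S ∈ A ∧ IsEssUB N E S ∧ ∀ U ∈ A, IsEssUB N E U → S \ U ∈ N

/-- Every collection of measurable sets admits an essential supremum. -/
def Localizable (A N : Set (Set X)) : Prop :=
  ∀ E ⊆ A, ∃ S, IsEssSup A N E S

/-- The members of `E` pairwise intersect negligibly. -/
def AlmostDisjointed (N E : Set (Set X)) : Prop :=
  E.Pairwise fun e e' => e ∩ e' ∈ N

/-- Countable chain condition: almost disjointed families of non-negligible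
measurable sets are countable. -/
def CCC (A N : Set (Set X)) : Prop :=
  ∀ E : Set (Set X), E ⊆ A → (∀ e ∈ E, e ∉ N) → AlmostDisjointed N E → E.Countable

/-- Local determination for an MSN with carrier `Z`. -/
def LocallyDetermined (Z : Set X) (A N : Set (Set X)) : Prop :=
  ∀ E ⊆ A, IsEssSup A N E Z → ∀ s ⊆ Z, (∀ e ∈ E, s ∩ e ∈ A) → s ∈ A

/-- Trace of a collection of sets on a subset `Z`. -/
def Sub (A : Set (Set X)) (Z : Set X) : Set (Set X) := (· ∩ Z) '' A


/-- The underlying set of the coproduct `⨿_{Z ∈ E} Z`, realised as the set of pairs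
`(Z, x)` with `Z ∈ E` and `x ∈ Z`. -/
def hatCarrier {X : Type*} (E : Set (Set X)) : Set (Set X × X) :=
  {q | q.1 ∈ E ∧ q.2 ∈ q.1}

/-- The trace `{x ∈ Z : (Z, x) ∈ s}` of a subset `s` of `X̂ = ⨿_{Z ∈ E} Z` on the
copy of `Z ∈ E`. -/
def hatTrace {X : Type*} (E : Set (Set X)) (Z : Set X) (s : Set ↥(hatCarrier E)) :
    Set X :=
  {x | ((Z, x) : Set X × X) ∈ Subtype.val '' s}

/-- The coproduct σ-algebra on `X̂ = ⨿_{Z ∈ E} Z`: a set is measurable iff each of its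
traces is the trace on `Z` of a measurable subset of `X`. -/
def hatMS {X : Type*} [MeasurableSpace X] (E : Set (Set X)) :
    MeasurableSpace ↥(hatCarrier E) where
  MeasurableSet' s := ∀ Z ∈ E, ∃ a : Set X, MeasurableSet a ∧ hatTrace E Z s = a ∩ Z
  measurableSet_empty := fun Z _ => ⟨∅, MeasurableSet.empty, by simp [hatTrace]⟩
  measurableSet_compl := by
    intro s hs Z hZ
    obtain ⟨a, ha, hta⟩ := hs Z hZ
    refine ⟨aᶜ, ha.compl, ?_⟩
    ext x
    constructor
    · rintro ⟨q, hq, hqe⟩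
      have hmem : (Z, x) ∈ hatCarrier E := by rw [← hqe]; exact q.2
      refine ⟨fun hxa : x ∈ a => hq ?_, hmem.2⟩
      have : x ∈ hatTrace E Z s := by rw [hta]; exact ⟨hxa, hmem.2⟩
      obtain ⟨q', hq', hq'e⟩ := this
      have : q' = q := Subtype.val_injective (hq'e.trans hqe.symm)
      rwa [← this]
    · rintro ⟨hxa, hxZ⟩
      refine ⟨⟨(Z, x), ⟨hZ, hxZ⟩⟩, fun hmem => hxa ?_, rfl⟩
      have : x ∈ hatTrace E Z s := ⟨_, hmem, rfl⟩
      rw [hta] at this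
      exact this.1
  measurableSet_iUnion := by
    intro f hf Z hZ
    choose a ha hta using fun n => hf n Z hZ
    refine ⟨⋃ n, a n, MeasurableSet.iUnion ha, ?_⟩
    have : hatTrace E Z (⋃ n, f n) = ⋃ n, hatTrace E Z (f n) := by
      ext x
      simp only [hatTrace, Set.image_iUnion, Set.mem_iUnion, Set.mem_setOf_eq]
    rw [this, Set.iUnion_congr hta, Set.iUnion_inter]

theorem hatTrace_preimage {X : Type*} (E : Set (Set X)) (a : Set X) {Z : Set X} (hZ : Z ∈ E) :
    hatTrace E Z ((fun q : ↥(hatCarrier E) => (q : Set X × X).2) ⁻¹' a) = a ∩ Z := by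
  ext x
  simp only [hatTrace, Set.mem_setOf_eq, Set.mem_image, Set.mem_inter_iff,
    Set.mem_preimage]
  constructor
  · rintro ⟨q, hq, hqe⟩
    have hc := q.2
    rw [hqe] at hq hc
    exact ⟨hq, hc.2⟩
  · rintro ⟨hxa, hxZ⟩
    exact ⟨⟨(Z, x), ⟨hZ, hxZ⟩⟩, hxa, rfl⟩

theorem hatTrace_symmDiff {X : Type*} (E : Set (Set X)) (Z : Set X) (s t : Set ↥(hatCarrier E)) :
    hatTrace E Z (s ∆ t) = hatTrace E Z s ∆ hatTrace E Z t := by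
  unfold hatTrace
  rw [Set.image_symmDiff Subtype.val_injective]
  ext x
  simp [Set.mem_symmDiff]

theorem null_of_traces_null {X : Type*} [MeasurableSpace X] {μ : Measure X}
    {E : Set (Set X)}
    (hgen : IsEssSup {s : Set X | MeasurableSet s}
      {s : Set X | MeasurableSet s ∧ μ s = 0} E Set.univ)
    (hEA : ∀ Z ∈ E, MeasurableSet Z)
    {a : Set X} (ha : MeasurableSet a) (h : ∀ Z ∈ E, μ (a ∩ Z) = 0) : μ a = 0 := by
  have hub : IsEssUB {s : Set X | MeasurableSet s ∧ μ s = 0} E aᶜ := by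
    intro Z hZ
    refine ⟨(hEA Z hZ).diff ha.compl, ?_⟩
    rw [Set.diff_compl, Set.inter_comm]
    exact h Z hZ
  have := hgen.2.2 aᶜ ha.compl hub
  rw [show Set.univ \ aᶜ = a by simp] at this
  exact this.2

theorem aedisjoint_inter {X : Type*} [MeasurableSpace X] {μ : Measure X}
    {E : Set (Set X)}
    (hdisj : AlmostDisjointed {s : Set X | MeasurableSet s ∧ μ s = 0} E)
    (a : Set X) :
    Pairwise (Function.onFun (AEDisjoint μ) (fun Z : ↥E => a ∩ (Z : Set X))) := by
  intro Z W hZW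
  have hne : (Z : Set X) ≠ (W : Set X) := fun h => hZW (Subtype.coe_injective h)
  have hnull := (hdisj Z.2 W.2 hne).2
  exact measure_mono_null
    (Set.inter_subset_inter Set.inter_subset_right Set.inter_subset_right) hnull

/-- The key measure identity: the sum of the measures of the traces equals the measure. -/
theorem tsum_traces {X : Type*} [MeasurableSpace X] {μ : Measure X} {E : Set (Set X)}
    (hEA : ∀ Z ∈ E, MeasurableSet Z)
    (hdisj : AlmostDisjointed {s : Set X | MeasurableSet s ∧ μ s = 0} E)
    (hgen : IsEssSup {s : Set X | MeasurableSet s}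
      {s : Set X | MeasurableSet s ∧ μ s = 0} E Set.univ)
    {a : Set X} (ha : MeasurableSet a) :
    ∑' Z : ↥E, μ (a ∩ (Z : Set X)) = μ a := by
  have hpw := aedisjoint_inter (μ := μ) hdisj a
  refine le_antisymm ?_ ?_
  · rw [ENNReal.tsum_eq_iSup_sum]
    refine iSup_le fun F => ?_
    rw [← measure_biUnion_finset₀ (fun Z _ W _ h => hpw h)
      (fun Z _ => ((ha.inter (hEA Z Z.2)).nullMeasurableSet))]
    exact measure_mono (by simp only [Set.iUnion_subset_iff]; exact fun Z _ => Set.inter_subset_left)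
  · by_cases htop : ∑' Z : ↥E, μ (a ∩ (Z : Set X)) = ⊤
    · rw [htop]; exact le_top
    · -- countable support
      have hcnt : {Z : ↥E | μ (a ∩ (Z : Set X)) ≠ 0}.Countable := by
        have := Summable.countable_support_ennreal htop
        simpa [Function.support] using this
      set S : Set (Set X) := {Z | ∃ h : Z ∈ E, μ (a ∩ Z) ≠ 0} with hS
      have hScnt : S.Countable := by
        have : S = Subtype.val '' {Z : ↥E | μ (a ∩ (Z : Set X)) ≠ 0} := by
          ext Z
          simp only [hS, Set.mem_setOf_eq, Set.mem_image]
          constructor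
          · rintro ⟨h, hne⟩; exact ⟨⟨Z, h⟩, hne, rfl⟩
          · rintro ⟨⟨W, hW⟩, hne, rfl⟩; exact ⟨hW, hne⟩
        rw [this]
        exact hcnt.image _
      have hSE : S ⊆ E := fun Z hZ => hZ.1
      set u : Set X := ⋃₀ S with hu
      have hum : MeasurableSet u :=
        MeasurableSet.sUnion hScnt (fun Z hZ => hEA Z (hSE hZ))
      have hnull : μ (a \ u) = 0 := by
        refine null_of_traces_null hgen hEA (ha.diff hum) (fun Z hZ => ?_)
        by_cases hz : μ (a ∩ Z) = 0
        · exact measure_mono_null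
            (Set.inter_subset_inter (Set.diff_subset) (subset_refl _)) hz
        · have hZu : Z ⊆ u := Set.subset_sUnion_of_mem ⟨hZ, hz⟩
          have : (a \ u) ∩ Z = ∅ := by
            ext x; simp only [Set.mem_inter_iff, Set.mem_diff, Set.mem_empty_iff_false,
              iff_false, not_and]
            intro h hx
            exact absurd (hZu hx) h.2
          simp [this]
      calc μ a ≤ μ (a ∩ u) + μ (a \ u) := by
            rw [← measure_inter_add_diff a hum]
        _ = μ (a ∩ u) := by rw [hnull, add_zero]
        _ = μ (⋃ Z ∈ S, a ∩ Z) := by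
            congr 1
            rw [hu, Set.sUnion_eq_biUnion, Set.inter_iUnion₂]
        _ = ∑' Z : S, μ (a ∩ (Z : Set X)) := by
            refine measure_biUnion₀ hScnt ?_ (fun Z hZ => (ha.inter (hEA Z (hSE hZ))).nullMeasurableSet)
            intro Z hZ W hW hne
            have := (hdisj (hSE hZ) (hSE hW) hne).2
            exact measure_mono_null
              (Set.inter_subset_inter Set.inter_subset_right Set.inter_subset_right) this
        _ ≤ ∑' Z : ↥E, μ (a ∩ (Z : Set X)) := by
            rw [tsum_subtype S (fun Z => μ (a ∩ Z)), tsum_subtype E (fun Z => μ (a ∩ Z))]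
            refine ENNReal.tsum_le_tsum (fun Z => ?_)
            refine Set.indicator_le_indicator_of_subset hSE (fun _ => zero_le) Z

set_option maxHeartbeats 1000000 in
theorem main_aux {X : Type*} [MeasurableSpace X] (μ : Measure X)
    (E : Set (Set X)) (hEA : ∀ Z ∈ E, MeasurableSet Z)
    (hEfin : ∀ Z ∈ E, μ Z < ⊤)
    (hdisj : AlmostDisjointed {s : Set X | MeasurableSet s ∧ μ s = 0} E)
    (hgen : IsEssSup {s : Set X | MeasurableSet s}
      {s : Set X | MeasurableSet s ∧ μ s = 0} E Set.univ)
    [m2 : MeasurableSpace ↥(hatCarrier E)]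
    (hm2 : ∀ s : Set ↥(hatCarrier E), MeasurableSet s →
      ∀ Z ∈ E, ∃ a, MeasurableSet a ∧ hatTrace E Z s = a ∩ Z)
    (hpm : Measurable fun q : ↥(hatCarrier E) => (q : Set X × X).2)
    (μhat : Measure ↥(hatCarrier E))
    (hμhat : ∀ s : Set ↥(hatCarrier E), MeasurableSet s →
        μhat s = ∑' Z : ↥E, μ (hatTrace E (↑Z) s)) :
    ∃ T : Lp ℝ 1 μ →ₗᵢ[ℝ] Lp ℝ 1 μhat,
        Function.Surjective T ∧
          ∀ f : Lp ℝ 1 μ,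
            (T f : ↥(hatCarrier E) → ℝ) =ᵐ[μhat] fun z => (f : X → ℝ) z.1.2 := by
  set p : ↥(hatCarrier E) → X := fun q => (q : Set X × X).2 with hp
  have hmp : MeasurePreserving p μhat μ := by
    refine ⟨hpm, ?_⟩
    ext a ha
    rw [Measure.map_apply hpm ha, hμhat _ (hpm ha),
      tsum_congr (fun Z : ↥E => by rw [hatTrace_preimage E a Z.2])]
    exact tsum_traces hEA hdisj hgen ha
  set T0 := Lp.compMeasurePreserving (E := ℝ) (p := 1) p hmp with hT0
  have hsmul : ∀ (c : ℝ) (f : Lp ℝ 1 μ), T0 (c • f) = c • T0 f := by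
    intro c f
    apply Lp.ext
    have h1 := Lp.coeFn_compMeasurePreserving (μ := μhat) (c • f) hmp
    have h2 := Lp.coeFn_compMeasurePreserving (μ := μhat) f hmp
    have h3 : ((c • f : Lp ℝ 1 μ) : X → ℝ) =ᵐ[μ] c • (f : X → ℝ) := Lp.coeFn_smul c f
    have h3' : (((c • f : Lp ℝ 1 μ) : X → ℝ) ∘ p) =ᵐ[μhat] (c • (f : X → ℝ)) ∘ p :=
      hmp.quasiMeasurePreserving.ae_eq_comp h3
    have h4 := Lp.coeFn_smul c (T0 f)
    filter_upwards [h1, h2, h3', h4] with z e1 e2 e3 e4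
    rw [hT0]
    calc (⇑(Lp.compMeasurePreserving p hmp) (c • f) : ↥(hatCarrier E) → ℝ) z
        = (((c • f : Lp ℝ 1 μ) : X → ℝ) ∘ p) z := e1
      _ = ((c • ((f : Lp ℝ 1 μ) : X → ℝ)) ∘ p) z := e3
      _ = c • (((f : Lp ℝ 1 μ) : X → ℝ) ∘ p) z := rfl
      _ = c • ((Lp.compMeasurePreserving p hmp f : ↥(hatCarrier E) → ℝ) z) := by rw [← e2]
      _ = ((c • T0 f : Lp ℝ 1 μhat) : ↥(hatCarrier E) → ℝ) z := by rw [e4, hT0]; rfl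
  set T : Lp ℝ 1 μ →ₗᵢ[ℝ] Lp ℝ 1 μhat :=
    ⟨{ toFun := ⇑T0, map_add' := map_add T0, map_smul' := hsmul },
      fun f => Lp.norm_compMeasurePreserving f hmp⟩ with hT
  have hTapp : ∀ f, T f = T0 f := fun _ => rfl
  refine ⟨T, ?_, ?_⟩
  · -- surjectivity
    set R := LinearMap.range T.toLinearMap with hR
    have hclosed : IsClosed (R : Set (Lp ℝ 1 μhat)) := by
      rw [hR, LinearMap.coe_range]
      exact T.isometry.isClosedEmbedding.isClosed_range
    have hall : ∀ g : Lp ℝ 1 μhat, g ∈ R.topologicalClosure := by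
      refine Lp.induction (μ := μhat) one_ne_top
        (fun g => g ∈ R.topologicalClosure) ?_ ?_ ?_
      · intro c s hs hμs
        rw [Lp.simpleFunc.coe_indicatorConst, ← SetLike.mem_coe,
          Submodule.topologicalClosure_coe]
        rw [Metric.mem_closure_iff]
        intro ε hε
        have hs' : ∀ Z ∈ E, ∃ a, MeasurableSet a ∧ hatTrace E Z s = a ∩ Z := hm2 s hs
        choose aZ haZm haZtr using fun Z : ↥E => hs' Z.1 Z.2
        have htot : ∑' Z : ↥E, μ (hatTrace E (Z : Set X) s) ≠ ⊤ := by
          rw [← hμhat s hs]; exact hμs.ne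
        set δ : ℝ≥0∞ := ENNReal.ofReal (ε / (‖c‖ + 1)) with hδdef
        have hδpos : 0 < δ := by
          rw [hδdef]
          apply ENNReal.ofReal_pos.2
          positivity
        obtain ⟨F, hF⟩ := ((tendsto_order.1
          (ENNReal.tendsto_tsum_compl_atTop_zero htot)).2 δ hδpos).exists
        set aF : Set X := ⋃ Z ∈ F, (aZ Z ∩ (Z : Set X)) with haF
        have haFm : MeasurableSet aF :=
          F.measurableSet_biUnion fun Z _ => (haZm Z).inter (hEA Z Z.2)
        have haFfin : μ aF ≠ ⊤ := by
          refine (lt_of_le_of_lt (measure_biUnion_finset_le F _) ?_).ne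
          refine ENNReal.sum_lt_top.2 fun Z _ => ?_
          exact lt_of_le_of_lt (measure_mono Set.inter_subset_right) (hEfin Z Z.2)
        set B : Set ↥(hatCarrier E) := p ⁻¹' aF with hB
        have hBm : MeasurableSet B := hpm haFm
        have hμB : μhat B ≠ ⊤ := by
          rw [hB, hmp.measure_preimage haFm.nullMeasurableSet]
          exact haFfin
        refine ⟨T (indicatorConstLp 1 haFm haFfin c), ⟨_, rfl⟩, ?_⟩
        have hTi : T (indicatorConstLp 1 haFm haFfin c) = indicatorConstLp 1 hBm hμB c := by
          rw [hTapp, hT0, Lp.indicatorConstLp_compMeasurePreserving haFm haFfin c hmp]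
        rw [hTi, dist_indicatorConstLp_eq_norm, norm_indicatorConstLp one_ne_zero one_ne_top]
        -- bound the measure of the symmetric difference
        have hkey : μhat (s ∆ B) ≤
            ∑' Z : ↥((↑F : Set ↥E)ᶜ), μ (hatTrace E ((Z : ↥E) : Set X) s) := by
          rw [hμhat _ (hs.symmDiff hBm)]
          have htr : ∀ Z : ↥E, hatTrace E (Z : Set X) (s ∆ B) =
              (hatTrace E (Z : Set X) s) ∆ (aF ∩ (Z : Set X)) := by
            intro Z
            rw [hatTrace_symmDiff, hB, hatTrace_preimage E aF Z.2]
          have hinF : ∀ Z : ↥E, Z ∈ F → μ (hatTrace E (Z : Set X) (s ∆ B)) = 0 := by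
            intro Z hZF
            rw [htr Z, haZtr Z]
            have hsub : aZ Z ∩ (Z : Set X) ⊆ aF :=
              Set.subset_biUnion_of_mem (u := fun Z : ↥E => aZ Z ∩ (Z : Set X)) hZF
            have h1 : (aZ Z ∩ (Z : Set X)) ∆ (aF ∩ (Z : Set X)) ⊆
                ⋃ W ∈ F, ((aZ W ∩ (W : Set X) ∩ (Z : Set X)) \ (aZ Z ∩ (Z : Set X))) := by
              intro x hx
              rcases Set.mem_symmDiff.1 hx with ⟨hx1, hx2⟩ | ⟨hx1, hx2⟩
              · exact absurd ⟨hsub hx1, hx1.2⟩ hx2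
              · obtain ⟨hx3, hx4⟩ := hx1
                rw [haF] at hx3
                simp only [Set.mem_iUnion] at hx3 ⊢
                obtain ⟨W, hWF, hxW⟩ := hx3
                exact ⟨W, hWF, ⟨⟨hxW, hx4⟩, hx2⟩⟩
            refine measure_mono_null h1 ((measure_biUnion_null_iff F.countable_toSet).2 ?_)
            intro W hWF
            by_cases hWZ : W = Z
            · subst hWZ
              have : (aZ W ∩ (W : Set X) ∩ (W : Set X)) \ (aZ W ∩ (W : Set X)) = ∅ := by
                ext x; simp only [Set.mem_diff, Set.mem_inter_iff, Set.mem_empty_iff_false,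
                  iff_false, not_and, Classical.not_not]
                tauto
              simp [this]
            · have hne : (W : Set X) ≠ (Z : Set X) := fun h => hWZ (Subtype.coe_injective h)
              have hnull := (hdisj W.2 Z.2 hne).2
              refine measure_mono_null ?_ hnull
              intro x hx
              exact ⟨hx.1.1.2, hx.1.2⟩
          have hninF : ∀ Z : ↥E, Z ∉ F →
              μ (hatTrace E (Z : Set X) (s ∆ B)) ≤ μ (hatTrace E (Z : Set X) s) := by
            intro Z hZF
            rw [htr Z]
            refine le_trans (measure_mono Set.symmDiff_subset_union)
              (le_trans (measure_union_le _ _) ?_)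
            have h0 : μ (aF ∩ (Z : Set X)) = 0 := by
              rw [haF, Set.iUnion₂_inter]
              refine (measure_biUnion_null_iff F.countable_toSet).2 fun W hWF => ?_
              have hWZ : W ≠ Z := fun h => hZF (h ▸ hWF)
              have hne : (W : Set X) ≠ (Z : Set X) := fun h => hWZ (Subtype.coe_injective h)
              have hnull := (hdisj W.2 Z.2 hne).2
              refine measure_mono_null ?_ hnull
              intro x hx
              exact ⟨hx.1.2, hx.2⟩
            rw [h0, add_zero]
          calc ∑' Z : ↥E, μ (hatTrace E (Z : Set X) (s ∆ B))
              = ∑ Z ∈ F, μ (hatTrace E (Z : Set X) (s ∆ B)) +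
                ∑' Z : ↥((↑F : Set ↥E)ᶜ), μ (hatTrace E ((Z : ↥E) : Set X) (s ∆ B)) := by
                rw [← Summable.tsum_add_tsum_compl (s := (↑F : Set ↥E)) ENNReal.summable
                  ENNReal.summable]
                congr 1
                exact Finset.tsum_subtype F (fun Z : ↥E => μ (hatTrace E (Z : Set X) (s ∆ B)))
            _ = ∑' Z : ↥((↑F : Set ↥E)ᶜ), μ (hatTrace E ((Z : ↥E) : Set X) (s ∆ B)) := by
                rw [Finset.sum_eq_zero (fun Z hZ => hinF Z hZ), zero_add]
            _ ≤ ∑' Z : ↥((↑F : Set ↥E)ᶜ), μ (hatTrace E ((Z : ↥E) : Set X) s) :=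
                ENNReal.tsum_le_tsum fun Z => hninF Z.1 Z.2
        have hlt : μhat (s ∆ B) < δ := lt_of_le_of_lt hkey hF
        have htoReal : (μhat (s ∆ B)).toReal ≤ ε / (‖c‖ + 1) := by
          rw [hδdef] at hlt
          calc (μhat (s ∆ B)).toReal ≤ (ENNReal.ofReal (ε / (‖c‖ + 1))).toReal :=
                ENNReal.toReal_mono ENNReal.ofReal_ne_top hlt.le
            _ = ε / (‖c‖ + 1) := ENNReal.toReal_ofReal (by positivity)
        have hexp : (1 : ℝ≥0∞).toReal = 1 := ENNReal.toReal_one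
        rw [hexp]
        calc ‖c‖ * (μhat (s ∆ B)).toReal ^ (1 / 1 : ℝ)
            = ‖c‖ * (μhat (s ∆ B)).toReal := by rw [div_one, Real.rpow_one]
          _ ≤ ‖c‖ * (ε / (‖c‖ + 1)) := by
              exact mul_le_mul_of_nonneg_left htoReal (norm_nonneg c)
          _ < ε := by
              rw [mul_div_assoc']
              rw [div_lt_iff₀ (by positivity)]
              nlinarith [norm_nonneg c, hε]
      · intro f g hf hg _ hPf hPg
        exact Submodule.add_mem _ hPf hPg
      · have : {f : Lp ℝ 1 μhat | f ∈ R.topologicalClosure} = ↑R.topologicalClosure := rfl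
        rw [this]
        exact R.isClosed_topologicalClosure
    intro g
    have hg : g ∈ R := Submodule.topologicalClosure_minimal R le_rfl hclosed (hall g)
    obtain ⟨f, hf⟩ := hg
    exact ⟨f, hf⟩
  · intro f
    exact Lp.coeFn_compMeasurePreserving (μ := μhat) f hmp


/-- Strictly localizable version: if `E` is an almost disjointed generating family of
sets of finite nonzero measure in a complete semi-finite measure space `(X, 𝒜, μ)`,
and `μ̂` is the measure on `X̂ = ⨿_{Z ∈ E} Z` given by `μ̂(Â) = ∑_{Z ∈ E} μ {x ∈ Z :
(Z, x) ∈ Â}`, then composition with the projection `p (Z, x) = x` induces an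
isometric isomorphism (a surjective linear isometry) `L¹(X, 𝒜, μ) ≃ L¹(X̂, 𝒜̂, μ̂)`. -/
theorem strictlyLocalizableVersion_L1 {X : Type*} [MeasurableSpace X] (μ : Measure X)
    (hcomplete : ∀ s t : Set X, s ⊆ t → MeasurableSet t → μ t = 0 → MeasurableSet s)
    (hsemifinite : ∀ s : Set X, MeasurableSet s → μ s = ⊤ →
      ∃ t, t ⊆ s ∧ MeasurableSet t ∧ 0 < μ t ∧ μ t < ⊤)
    (E : Set (Set X)) (hEA : ∀ Z ∈ E, MeasurableSet Z)
    (hEN : ∀ Z ∈ E, μ Z ≠ 0) (hEfin : ∀ Z ∈ E, μ Z < ⊤)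
    (hdisj : AlmostDisjointed {s : Set X | MeasurableSet s ∧ μ s = 0} E)
    (hgen : IsEssSup {s : Set X | MeasurableSet s}
      {s : Set X | MeasurableSet s ∧ μ s = 0} E Set.univ) :
    letI : MeasurableSpace ↥(hatCarrier E) := hatMS E
    ∀ μhat : Measure ↥(hatCarrier E),
      (∀ s : Set ↥(hatCarrier E), MeasurableSet s →
        μhat s = ∑' Z : ↥E, μ (hatTrace E (↑Z) s)) →
      ∃ T : Lp ℝ 1 μ →ₗᵢ[ℝ] Lp ℝ 1 μhat,
        Function.Surjective T ∧
          ∀ f : Lp ℝ 1 μ,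
            (T f : ↥(hatCarrier E) → ℝ) =ᵐ[μhat] fun z => (f : X → ℝ) z.1.2 := by
  intro μhat hμhat
  exact main_aux μ E hEA hEfin hdisj hgen (m2 := hatMS E) (fun s hs => hs)
    (fun a ha Z hZ => ⟨a, ha, hatTrace_preimage E a hZ⟩) μhat hμhat

end MSNPaper
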